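/- Let σ and τ be permutations of {1, …, 2n−2} such that σ and τ select the same multiset of variable positions in the structured matrix B_n(u) (i.e., they generate the same monomial in the Laplace expansion of det B_n(u)). Then sgn(σ) = sgn(τ), where B_n(u) is the (2n−2)×(2n−2) matrix with columns indexed in pairs (2i−1, 2i) for i = 1,…,n−1 such that B_n(u)_{j, 2i−1} = u_{i,j} and B_n(u)_{j+1, 2i} = u_{i,j} for j = 1,…,2n−3, all other entries zero, and the u_{i,j} are distinct indeterminates. -/

import Mathlib

open Finset MvPolynomial

/-- The `(2n-2) × (2n-2)` structured matrix `B_n(u)` of indeterminates: the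
variable `u_{i,j}` appears at positions `(j, 2i)` and `(j+1, 2i+1)`
(0-indexed), all other entries are zero. -/
noncomputable def Bmat (n : ℕ) :
    Matrix (Fin (2 * n - 2)) (Fin (2 * n - 2))
      (MvPolynomial (Fin (n - 1) × Fin (2 * n - 3)) ℤ) :=
  Matrix.of fun p q =>
    if q.val % 2 = 0 then
      if hp : p.val < 2 * n - 3 then
        MvPolynomial.X (⟨q.val / 2, by have := q.isLt; omega⟩, ⟨p.val, hp⟩)
      else 0
    else
      if hp : 0 < p.val then
        MvPolynomial.X (⟨q.val / 2, by have := q.isLt; omega⟩,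
          ⟨p.val - 1, by have := p.isLt; omega⟩)
      else 0

/- ### Auxiliary lemmas -/

private lemma close_refl (m : ℕ) (c : Equiv.Perm (Fin m))
    (h : ∀ x, (c x).val = x.val + 1 ∨ c x = x ∨ (c x).val + 1 = x.val) :
    ∀ x, (c x).val = x.val + 1 → c (c x) = x := by
  by_contra hc
  push_neg at hc
  obtain ⟨x0, hx0, hcx0⟩ := hc
  set T : Finset (Fin m) :=
    Finset.univ.filter (fun x => (c x).val = x.val + 1 ∧ c (c x) ≠ x) with hT
  have hTne : T.Nonempty := ⟨x0, by simp [hT, hx0, hcx0]⟩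
  set x := T.max' hTne with hx
  obtain ⟨h1, h2⟩ : (c x).val = x.val + 1 ∧ c (c x) ≠ x := by
    have := T.max'_mem hTne
    simpa [hT] using this
  rcases h (c x) with h3 | h3 | h3
  · have hmem : c x ∈ T := by
      simp only [hT, Finset.mem_filter, Finset.mem_univ, true_and]
      refine ⟨h3, fun habs => ?_⟩
      exact h2 (c.injective habs)
    have hle : c x ≤ x := T.le_max' _ hmem
    have : (c x).val ≤ x.val := hle
    omega
  · have := c.injective h3
    rw [this] at h1
    omega
  · exact h2 (Fin.ext (by omega))

private lemma sign_close (m : ℕ) :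
    ∀ (N : ℕ) (c : Equiv.Perm (Fin m)),
      (∀ x, (c x).val = x.val + 1 ∨ c x = x ∨ (c x).val + 1 = x.val) →
      (Finset.univ.filter fun x => (c x).val = x.val + 1).card = N →
      Equiv.Perm.sign c = (-1) ^ N := by
  intro N
  induction N with
  | zero =>
    intro c h hcard
    have hnone : ∀ x : Fin m, ¬ ((c x).val = x.val + 1) := by
      intro x hx
      have hmm : x ∈ Finset.univ.filter (fun x => (c x).val = x.val + 1) := by
        simp [hx]
      rw [Finset.card_eq_zero] at hcard
      rw [hcard] at hmm
      simp at hmm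
    have hid : c = 1 := by
      have hsum : ∑ x : Fin m, ((x.val : ℤ) - (c x).val) = 0 := by
        rw [Finset.sum_sub_distrib]
        rw [Equiv.sum_comp c (fun x : Fin m => (x.val : ℤ))]
        ring
      have hnonneg : ∀ x ∈ Finset.univ, (0:ℤ) ≤ ((x.val:ℤ) - (c x).val) := by
        intro x _
        rcases h x with h' | h' | h'
        · exact absurd h' (hnone x)
        · rw [h']; omega
        · omega
      have hz := (Finset.sum_eq_zero_iff_of_nonneg hnonneg).mp hsum
      ext x
      have := hz x (Finset.mem_univ x)
      have : (c x).val = x.val := by omega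
      simpa [Fin.ext_iff] using this
    rw [hid]
    simp
  | succ N ih =>
    intro c h hcard
    obtain ⟨x, hx⟩ : ∃ x, (c x).val = x.val + 1 := by
      have : (Finset.univ.filter fun x => (c x).val = x.val + 1).Nonempty := by
        rw [← Finset.card_pos, hcard]; omega
      obtain ⟨x, hx⟩ := this
      exact ⟨x, (Finset.mem_filter.mp hx).2⟩
    have hcc : c (c x) = x := close_refl m c h x hx
    set y := c x with hy
    have hxy : x ≠ y := by
      intro he
      rw [← he] at hy
      have : (c x).val = x.val := by rw [← hy]
      omega
    set c' := Equiv.swap x y * c with hc'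
    have hc'x : c' x = x := by
      rw [hc', Equiv.Perm.mul_apply, ← hy, Equiv.swap_apply_right]
    have hc'y : c' y = y := by
      rw [hc', Equiv.Perm.mul_apply, hy, hcc, Equiv.swap_apply_left]
    have hother : ∀ z, z ≠ x → z ≠ y → c' z = c z := by
      intro z hzx hzy
      rw [hc', Equiv.Perm.mul_apply]
      apply Equiv.swap_apply_of_ne_of_ne
      · intro hczx
        apply hzy
        have : c z = c y := by rw [hczx, hy, hcc]
        exact c.injective this
      · intro hczy
        exact hzx (c.injective (hczy.trans hy))
    have h' : ∀ z, (c' z).val = z.val + 1 ∨ c' z = z ∨ (c' z).val + 1 = z.val := by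
      intro z
      rcases eq_or_ne z x with rfl | hzx
      · right; left; exact hc'x
      rcases eq_or_ne z y with rfl | hzy
      · right; left; exact hc'y
      · rw [hother z hzx hzy]; exact h z
    have hfe : (Finset.univ.filter fun z => (c' z).val = z.val + 1)
        = (Finset.univ.filter fun z => (c z).val = z.val + 1).erase x := by
      ext z
      simp only [Finset.mem_erase, Finset.mem_filter, Finset.mem_univ, true_and]
      constructor
      · intro hz
        have hzx : z ≠ x := by
          intro he; subst he; rw [hc'x] at hz; omega
        refine ⟨hzx, ?_⟩
        rcases eq_or_ne z y with rfl | hne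
        · rw [hc'y] at hz; omega
        · rwa [hother z hzx hne] at hz
      · rintro ⟨hzx, hz⟩
        have hzy : z ≠ y := by
          intro he; subst he
          have : (c y).val = x.val := by rw [hcc]
          have hyx : y.val = x.val + 1 := hx
          omega
        rw [hother z hzx hzy]; exact hz
    have hxmem : x ∈ (Finset.univ.filter fun z => (c z).val = z.val + 1) := by
      simp only [Finset.mem_filter, Finset.mem_univ, true_and, ← hy]
      exact hx
    have hcard' : (Finset.univ.filter fun z => (c' z).val = z.val + 1).card = N := by
      rw [hfe, Finset.card_erase_of_mem hxmem, hcard]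
      omega
    have hsign' := ih c' h' hcard'
    have hcs : Equiv.swap x y * c' = c := by
      rw [hc', ← mul_assoc, Equiv.swap_mul_self, one_mul]
    calc Equiv.Perm.sign c = Equiv.Perm.sign (Equiv.swap x y * c') := by rw [hcs]
      _ = Equiv.Perm.sign (Equiv.swap x y) * Equiv.Perm.sign c' := by
          rw [Equiv.Perm.sign_mul]
      _ = (-1) * (-1) ^ N := by rw [Equiv.Perm.sign_swap hxy, hsign']
      _ = (-1) ^ (N + 1) := by rw [pow_succ]; rw [mul_comm]

private lemma Bmat_char (n : ℕ) (p q : Fin (2 * n - 2))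
    (h : Bmat n p q ≠ 0) :
    ∃ v : Fin (n - 1) × Fin (2 * n - 3), Bmat n p q = MvPolynomial.X v ∧
      v.1.val = q.val / 2 ∧
      ((q.val % 2 = 0 ∧ v.2.val = p.val) ∨ (q.val % 2 = 1 ∧ v.2.val + 1 = p.val)) := by
  unfold Bmat at h ⊢
  simp only [Matrix.of_apply] at h ⊢
  by_cases h1 : q.val % 2 = 0
  · rw [if_pos h1] at h ⊢
    by_cases h2 : p.val < 2 * n - 3
    · rw [dif_pos h2]
      exact ⟨_, rfl, rfl, Or.inl ⟨h1, rfl⟩⟩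
    · rw [dif_neg h2] at h
      exact absurd rfl h
  · rw [if_neg h1] at h ⊢
    by_cases h2 : 0 < p.val
    · rw [dif_pos h2]
      refine ⟨_, rfl, rfl, Or.inr ⟨by omega, ?_⟩⟩
      show p.val - 1 + 1 = p.val
      omega
    · rw [dif_neg h2] at h
      exact absurd rfl h

private lemma prod_X_eq {κ ι : Type*} (s : Finset κ) (f : κ → ι) :
    (∏ k ∈ s, (MvPolynomial.X (f k) : MvPolynomial ι ℤ)) =
      MvPolynomial.monomial (∑ k ∈ s, Finsupp.single (f k) 1) 1 := by
  classical
  induction s using Finset.cons_induction with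
  | empty => simp
  | cons a s ha ih =>
      rw [Finset.prod_cons, Finset.sum_cons, ih, X, monomial_mul, one_mul]

private def prn (n : ℕ) (k : Fin (2 * n - 2)) : Fin (n - 1) :=
  ⟨k.val / 2, by have := k.isLt; omega⟩
private def idx0 (n : ℕ) (p : Fin (n - 1)) : Fin (2 * n - 2) :=
  ⟨2 * p.val, by have := p.isLt; omega⟩
private def idx1 (n : ℕ) (p : Fin (n - 1)) : Fin (2 * n - 2) :=
  ⟨2 * p.val + 1, by have := p.isLt; omega⟩

private def flipFun (n : ℕ) (S : Finset (Fin (n - 1))) (k : Fin (2 * n - 2)) :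
    Fin (2 * n - 2) :=
  if prn n k ∈ S then
    (if _h : k.val % 2 = 0 then ⟨k.val + 1, by have := k.isLt; omega⟩
     else ⟨k.val - 1, by have := k.isLt; omega⟩)
  else k

private lemma flipFun_val (n : ℕ) (S : Finset (Fin (n - 1))) (k : Fin (2 * n - 2)) :
    (flipFun n S k).val =
      if prn n k ∈ S then (if k.val % 2 = 0 then k.val + 1 else k.val - 1)
      else k.val := by
  unfold flipFun
  by_cases h1 : prn n k ∈ S
  · rw [if_pos h1, if_pos h1]
    by_cases h2 : k.val % 2 = 0
    · rw [dif_pos h2, if_pos h2]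
    · rw [dif_neg h2, if_neg h2]
  · rw [if_neg h1, if_neg h1]

private lemma prn_flipFun (n : ℕ) (S : Finset (Fin (n - 1))) (k : Fin (2 * n - 2)) :
    prn n (flipFun n S k) = prn n k := by
  apply Fin.ext
  show (flipFun n S k).val / 2 = k.val / 2
  rw [flipFun_val]
  by_cases h1 : prn n k ∈ S
  · rw [if_pos h1]
    by_cases h2 : k.val % 2 = 0
    · rw [if_pos h2]; omega
    · rw [if_neg h2]; omega
  · rw [if_neg h1]

private lemma flipFun_invol (n : ℕ) (S : Finset (Fin (n - 1))) :
    Function.Involutive (flipFun n S) := by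
  intro k
  apply Fin.ext
  have h1 := flipFun_val n S k
  have h2 := flipFun_val n S (flipFun n S k)
  rw [prn_flipFun] at h2
  by_cases hm : prn n k ∈ S
  · rw [if_pos hm] at h1 h2
    by_cases hp : k.val % 2 = 0
    · rw [if_pos hp] at h1
      rw [h1] at h2
      rw [if_neg (by omega)] at h2
      omega
    · rw [if_neg hp] at h1
      rw [h1] at h2
      rw [if_pos (by omega)] at h2
      omega
  · rw [if_neg hm] at h1 h2
    omega

private noncomputable def flipPerm (n : ℕ) (S : Finset (Fin (n - 1))) :
    Equiv.Perm (Fin (2 * n - 2)) :=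
  Function.Involutive.toPerm _ (flipFun_invol n S)

private lemma flipPerm_apply (n : ℕ) (S : Finset (Fin (n - 1))) (k : Fin (2 * n - 2)) :
    flipPerm n S k = flipFun n S k := rfl

private lemma pair_dich (M a b c d : ℕ)
    (H : ∀ j, j < M → ((if a = j then 1 else 0) + (if b = j then 1 else 0) : ℕ)
      = (if c = j then 1 else 0) + (if d = j then 1 else 0))
    (ha : a < M) (hb : b < M) :
    (a = c ∧ b = d) ∨ (a = d ∧ b = c) := by
  have h1 := H a ha
  have h2 := H b hb
  split_ifs at h1 h2 <;> omega
/-- if two permutations `σ, τ` of `{1,…,2n-2}` generate the same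
(nonzero) monomial in the Laplace expansion of `det B_n(u)`, then they have the
same sign. -/
theorem stmt16 (n : ℕ) (hn : 2 ≤ n) (σ τ : Equiv.Perm (Fin (2 * n - 2)))
    (heq : ∏ k, Bmat n (σ k) k = ∏ k, Bmat n (τ k) k)
    (hne : ∏ k, Bmat n (σ k) k ≠ 0) :
    Equiv.Perm.sign σ = Equiv.Perm.sign τ := by
  classical
  have hneτ : ∏ k, Bmat n (τ k) k ≠ 0 := heq ▸ hne
  have hσ0 : ∀ k, Bmat n (σ k) k ≠ 0 :=
    fun k => Finset.prod_ne_zero_iff.mp hne k (Finset.mem_univ k)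
  have hτ0 : ∀ k, Bmat n (τ k) k ≠ 0 :=
    fun k => Finset.prod_ne_zero_iff.mp hneτ k (Finset.mem_univ k)
  choose wσ hwσ1 hwσ2 hwσ3 using fun k => Bmat_char n (σ k) k (hσ0 k)
  choose wτ hwτ1 hwτ2 hwτ3 using fun k => Bmat_char n (τ k) k (hτ0 k)
  -- exponent vectors agree
  have hE : (∑ k, Finsupp.single (wσ k) 1) = ∑ k, Finsupp.single (wτ k) 1 := by
    apply MvPolynomial.monomial_left_injective (R := ℤ) one_ne_zero
    show MvPolynomial.monomial _ (1:ℤ) = MvPolynomial.monomial _ (1:ℤ)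
    rw [← prod_X_eq, ← prod_X_eq]
    calc (∏ k, MvPolynomial.X (wσ k)) = ∏ k, Bmat n (σ k) k :=
          Finset.prod_congr rfl (fun k _ => (hwσ1 k).symm)
      _ = ∏ k, Bmat n (τ k) k := heq
      _ = ∏ k, MvPolynomial.X (wτ k) :=
          Finset.prod_congr rfl (fun k _ => hwτ1 k)
  -- index helpers
  have hidx01 : ∀ p : Fin (n-1), idx0 n p ≠ idx1 n p := by
    intro p he
    have : (idx0 n p).val = (idx1 n p).val := congrArg Fin.val he
    have h0 : (idx0 n p).val = 2 * p.val := rfl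
    have h1 : (idx1 n p).val = 2 * p.val + 1 := rfl
    omega
  -- per-pair counting
  have hcount : ∀ (p : Fin (n-1)) (j : Fin (2*n-3)),
      ((if wσ (idx0 n p) = (p, j) then 1 else 0)
        + (if wσ (idx1 n p) = (p, j) then 1 else 0) : ℕ)
      = (if wτ (idx0 n p) = (p, j) then 1 else 0)
        + (if wτ (idx1 n p) = (p, j) then 1 else 0) := by
    intro p j
    have key : ∀ (w : Fin (2*n-2) → Fin (n-1) × Fin (2*n-3)),
        (∀ k, (w k).1.val = k.val / 2) →
        (∑ k, Finsupp.single (w k) 1) (p, j) =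
        (if w (idx0 n p) = (p, j) then 1 else 0)
          + (if w (idx1 n p) = (p, j) then 1 else 0) := by
      intro w hw
      rw [Finsupp.finset_sum_apply]
      have hzero : ∀ k ∈ Finset.univ,
          k ∉ ({idx0 n p, idx1 n p} : Finset (Fin (2*n-2))) →
          (Finsupp.single (w k) (1:ℕ)) (p, j) = 0 := by
        intro k _ hk
        rw [Finsupp.single_apply, if_neg]
        intro he
        have hp1 : (p, j).1.val = k.val / 2 := by rw [← he]; exact hw k
        have hp1' : p.val = k.val / 2 := hp1
        simp only [Finset.mem_insert, Finset.mem_singleton] at hk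
        push_neg at hk
        have h0 : k.val ≠ 2 * p.val := by
          intro hh; exact hk.1 (Fin.ext hh)
        have h1 : k.val ≠ 2 * p.val + 1 := by
          intro hh; exact hk.2 (Fin.ext hh)
        have := k.isLt
        omega
      rw [← Finset.sum_subset (Finset.subset_univ _) hzero,
        Finset.sum_pair (hidx01 p), Finsupp.single_apply, Finsupp.single_apply]
    have hE' := DFunLike.congr_fun hE (p, j)
    rw [key wσ hwσ2, key wτ hwτ2] at hE'
    exact hE'
  -- first components of the chosen variables
  have hfstσ0 : ∀ p : Fin (n-1), (wσ (idx0 n p)).1 = p := by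
    intro p
    apply Fin.ext
    have h := hwσ2 (idx0 n p)
    have h' : (wσ (idx0 n p)).1.val = 2 * p.val / 2 := h
    omega
  have hfstσ1 : ∀ p : Fin (n-1), (wσ (idx1 n p)).1 = p := by
    intro p
    apply Fin.ext
    have h' : (wσ (idx1 n p)).1.val = (2 * p.val + 1) / 2 := hwσ2 (idx1 n p)
    omega
  have hfstτ0 : ∀ p : Fin (n-1), (wτ (idx0 n p)).1 = p := by
    intro p
    apply Fin.ext
    have h' : (wτ (idx0 n p)).1.val = 2 * p.val / 2 := hwτ2 (idx0 n p)
    omega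
  have hfstτ1 : ∀ p : Fin (n-1), (wτ (idx1 n p)).1 = p := by
    intro p
    apply Fin.ext
    have h' : (wτ (idx1 n p)).1.val = (2 * p.val + 1) / 2 := hwτ2 (idx1 n p)
    omega
  -- second components in terms of σ, τ
  have hsndσ0 : ∀ p : Fin (n-1), (wσ (idx0 n p)).2.val = (σ (idx0 n p)).val := by
    intro p
    rcases hwσ3 (idx0 n p) with ⟨_, h⟩ | ⟨h, _⟩
    · exact h
    · exfalso
      have h' : 2 * p.val % 2 = 1 := h
      omega
  have hsndσ1 : ∀ p : Fin (n-1), (wσ (idx1 n p)).2.val + 1 = (σ (idx1 n p)).val := by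
    intro p
    rcases hwσ3 (idx1 n p) with ⟨h, _⟩ | ⟨_, h⟩
    · exfalso
      have h' : (2 * p.val + 1) % 2 = 0 := h
      omega
    · exact h
  have hsndτ0 : ∀ p : Fin (n-1), (wτ (idx0 n p)).2.val = (τ (idx0 n p)).val := by
    intro p
    rcases hwτ3 (idx0 n p) with ⟨_, h⟩ | ⟨h, _⟩
    · exact h
    · exfalso
      have h' : 2 * p.val % 2 = 1 := h
      omega
  have hsndτ1 : ∀ p : Fin (n-1), (wτ (idx1 n p)).2.val + 1 = (τ (idx1 n p)).val := by
    intro p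
    rcases hwτ3 (idx1 n p) with ⟨h, _⟩ | ⟨_, h⟩
    · exfalso
      have h' : (2 * p.val + 1) % 2 = 0 := h
      omega
    · exact h
  -- the pair dichotomy in terms of σ, τ
  have pair : ∀ p : Fin (n-1),
      ((τ (idx0 n p)).val = (σ (idx0 n p)).val
        ∧ (τ (idx1 n p)).val = (σ (idx1 n p)).val) ∨
      ((τ (idx0 n p)).val + 1 = (σ (idx1 n p)).val
        ∧ (τ (idx1 n p)).val = (σ (idx0 n p)).val + 1) := by
    intro p
    have H : ∀ jv, jv < 2*n-3 →
        ((if (wσ (idx0 n p)).2.val = jv then 1 else 0)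
          + (if (wσ (idx1 n p)).2.val = jv then 1 else 0) : ℕ)
        = (if (wτ (idx0 n p)).2.val = jv then 1 else 0)
          + (if (wτ (idx1 n p)).2.val = jv then 1 else 0) := by
      intro jv hjv
      have hc := hcount p ⟨jv, hjv⟩
      have conv1 : ∀ (w : Fin (2*n-2) → Fin (n-1) × Fin (2*n-3)) k,
          (w k).1 = p →
          (if w k = (p, (⟨jv, hjv⟩ : Fin (2*n-3))) then (1:ℕ) else 0)
            = (if (w k).2.val = jv then 1 else 0) := by
        intro w k hfst
        apply if_congr _ rfl rfl
        constructor
        · intro h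
          rw [h]
        · intro h
          exact Prod.ext hfst (Fin.ext h)
      rw [conv1 wσ _ (hfstσ0 p), conv1 wσ _ (hfstσ1 p),
        conv1 wτ _ (hfstτ0 p), conv1 wτ _ (hfstτ1 p)] at hc
      exact hc
    have hd := pair_dich (2*n-3) _ _ _ _ H
      (wσ (idx0 n p)).2.isLt (wσ (idx1 n p)).2.isLt
    have e1 := hsndσ0 p
    have e2 := hsndσ1 p
    have e3 := hsndτ0 p
    have e4 := hsndτ1 p
    rcases hd with ⟨ha, hb⟩ | ⟨ha, hb⟩
    · left; omega
    · right; omega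
  -- the set of swapped pairs
  set S : Finset (Fin (n-1)) :=
    Finset.univ.filter (fun p => τ (idx0 n p) ≠ σ (idx0 n p)) with hS
  have hS1 : ∀ p ∈ S, (τ (idx0 n p)).val + 1 = (σ (idx1 n p)).val
      ∧ (τ (idx1 n p)).val = (σ (idx0 n p)).val + 1 := by
    intro p hp
    have hne' : τ (idx0 n p) ≠ σ (idx0 n p) := by
      rw [hS] at hp
      exact (Finset.mem_filter.mp hp).2
    rcases pair p with ⟨h1, h2⟩ | h
    · exact absurd (Fin.ext h1) hne'
    · exact h
  have hS2 : ∀ p ∉ S, τ (idx0 n p) = σ (idx0 n p) ∧ τ (idx1 n p) = σ (idx1 n p) := by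
    intro p hp
    have heqp : τ (idx0 n p) = σ (idx0 n p) := by
      rw [hS] at hp
      simp only [Finset.mem_filter, Finset.mem_univ, true_and, not_not] at hp
      exact hp
    refine ⟨heqp, ?_⟩
    have h0 : (τ (idx0 n p)).val = (σ (idx0 n p)).val := congrArg Fin.val heqp
    rcases pair p with ⟨h1, h2⟩ | ⟨h1, h2⟩
    · exact Fin.ext h2
    · exact Fin.ext (by omega)
  -- the permutations s and c
  set s : Equiv.Perm (Fin (2*n-2)) := flipPerm n S with hs
  set c : Equiv.Perm (Fin (2*n-2)) := τ * s * σ⁻¹ with hc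
  have hcσ : ∀ k, c (σ k) = τ (flipFun n S k) := by
    intro k
    rw [hc]
    simp only [Equiv.Perm.mul_apply, Equiv.Perm.inv_def, Equiv.symm_apply_apply]
    rw [hs, flipPerm_apply]
  -- key case analysis
  have hkey : ∀ k : Fin (2*n-2),
      (prn n k ∈ S ∧ k.val % 2 = 0 ∧ (c (σ k)).val = (σ k).val + 1) ∨
      (prn n k ∈ S ∧ k.val % 2 = 1 ∧ (c (σ k)).val + 1 = (σ k).val) ∨
      (prn n k ∉ S ∧ c (σ k) = σ k) := by
    intro k
    have hck := hcσ k
    by_cases hm : prn n k ∈ S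
    · by_cases hp : k.val % 2 = 0
      · left
        refine ⟨hm, hp, ?_⟩
        have hflip : flipFun n S k = idx1 n (prn n k) := by
          apply Fin.ext
          rw [flipFun_val, if_pos hm, if_pos hp]
          show k.val + 1 = 2 * (k.val / 2) + 1
          omega
        have hk0 : idx0 n (prn n k) = k := by
          apply Fin.ext
          show 2 * (k.val / 2) = k.val
          omega
        rw [hck, hflip]
        have := (hS1 _ hm).2
        rw [hk0] at this
        omega
      · right; left
        refine ⟨hm, by omega, ?_⟩
        have hflip : flipFun n S k = idx0 n (prn n k) := by
          apply Fin.ext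
          rw [flipFun_val, if_pos hm, if_neg hp]
          show k.val - 1 = 2 * (k.val / 2)
          omega
        have hk1 : idx1 n (prn n k) = k := by
          apply Fin.ext
          show 2 * (k.val / 2) + 1 = k.val
          omega
        rw [hck, hflip]
        have := (hS1 _ hm).1
        rw [hk1] at this
        omega
    · right; right
      refine ⟨hm, ?_⟩
      have hflip : flipFun n S k = k := by
        unfold flipFun
        rw [if_neg hm]
      rw [hck, hflip]
      by_cases hp : k.val % 2 = 0
      · have hk0 : idx0 n (prn n k) = k := by
          apply Fin.ext
          show 2 * (k.val / 2) = k.val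
          omega
        have := (hS2 _ hm).1
        rw [hk0] at this
        exact this
      · have hk1 : idx1 n (prn n k) = k := by
          apply Fin.ext
          show 2 * (k.val / 2) + 1 = k.val
          omega
        have := (hS2 _ hm).2
        rw [hk1] at this
        exact this
  -- hypotheses of sign_close for c and s
  have hypc : ∀ x, (c x).val = x.val + 1 ∨ c x = x ∨ (c x).val + 1 = x.val := by
    intro x
    have hx : σ (σ⁻¹ x) = x := σ.apply_symm_apply x
    rcases hkey (σ⁻¹ x) with ⟨_, _, hv⟩ | ⟨_, _, hv⟩ | ⟨_, hv⟩
    · left; rw [hx] at hv; exact hv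
    · right; right; rw [hx] at hv; exact hv
    · right; left; rw [hx] at hv; exact hv
  have hyps : ∀ k, (s k).val = k.val + 1 ∨ s k = k ∨ (s k).val + 1 = k.val := by
    intro k
    have hv := flipFun_val n S k
    rw [hs]
    by_cases hm : prn n k ∈ S
    · rw [if_pos hm] at hv
      by_cases hp : k.val % 2 = 0
      · left; rw [flipPerm_apply, hv, if_pos hp]
      · right; right
        rw [flipPerm_apply, hv, if_neg hp]
        omega
    · right; left
      rw [if_neg hm] at hv
      rw [flipPerm_apply]
      exact Fin.ext hv
  -- the up-sets correspond under σ
  have hiff2 : ∀ k, ((c (σ k)).val = (σ k).val + 1) ↔ ((s k).val = k.val + 1) := by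
    intro k
    have hsv := flipFun_val n S k
    rcases hkey k with ⟨hm, hp, hval⟩ | ⟨hm, hp, hval⟩ | ⟨hm, hval⟩
    · constructor
      · intro _
        rw [hs, flipPerm_apply, hsv, if_pos hm, if_pos hp]
      · intro _; exact hval
    · constructor
      · intro h; omega
      · intro h
        rw [hs, flipPerm_apply, hsv, if_pos hm, if_neg (by omega)] at h
        omega
    · constructor
      · intro h; rw [hval] at h; omega
      · intro h
        rw [hs, flipPerm_apply, hsv, if_neg hm] at h
        omega
  have himg : (Finset.univ.filter fun x => (c x).val = x.val + 1)
      = (Finset.univ.filter fun k => (s k).val = k.val + 1).image σ := by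
    ext x
    simp only [Finset.mem_filter, Finset.mem_univ, true_and, Finset.mem_image]
    constructor
    · intro hx
      refine ⟨σ⁻¹ x, ?_, σ.apply_symm_apply x⟩
      apply (hiff2 (σ⁻¹ x)).mp
      rw [show σ (σ⁻¹ x) = x from σ.apply_symm_apply x]
      exact hx
    · rintro ⟨k, hk, rfl⟩
      exact (hiff2 k).mpr hk
  have hcardeq : (Finset.univ.filter fun x => (c x).val = x.val + 1).card
      = (Finset.univ.filter fun k => (s k).val = k.val + 1).card := by
    rw [himg, Finset.card_image_of_injective _ σ.injective]
  set u : ℕ := (Finset.univ.filter fun k => (s k).val = k.val + 1).card with hu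
  have hsignc : Equiv.Perm.sign c = (-1) ^ u :=
    sign_close _ u c hypc (by rw [hcardeq])
  have hsigns : Equiv.Perm.sign s = (-1) ^ u :=
    sign_close _ u s hyps rfl
  -- recover τ
  have hss : ∀ x, s (s x) = x := by
    intro x
    rw [hs, flipPerm_apply, flipPerm_apply]
    exact flipFun_invol n S x
  have hτc : c * σ * s = τ := by
    ext x
    rw [hc]
    simp only [Equiv.Perm.mul_apply, Equiv.Perm.inv_def, Equiv.symm_apply_apply]
    rw [hss]
  have final : Equiv.Perm.sign τ = (-1)^u * Equiv.Perm.sign σ * (-1)^u := by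
    rw [← hτc, Equiv.Perm.sign_mul, Equiv.Perm.sign_mul, hsignc, hsigns]
  rw [final]
  have h2 : ((-1 : ℤˣ))^u * (-1)^u = 1 := by
    rw [← pow_add, ← two_mul, pow_mul]
    norm_num
  calc Equiv.Perm.sign σ = Equiv.Perm.sign σ * ((-1 : ℤˣ)^u * (-1)^u) := by
        rw [h2, mul_one]
    _ = (-1)^u * Equiv.Perm.sign σ * (-1)^u := by
        rw [← mul_assoc, mul_comm (Equiv.Perm.sign σ) ((-1 : ℤˣ)^u)]
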